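/- Let n be a positive multiple of 4 and let D ∈ 𝒟_n. Then the transition matrix of the integral circulant graph ICG_n(D) at time π/2 is the identity matrix; in particular ICG_n(D) is connected and periodic at π/2. -/

import Mathlib

open Matrix Complex Finset ArithmeticFunction

lemma chi_eq_one_iff (n : ℕ) [NeZero n] (c : ZMod n) : ZMod.stdAddChar c = 1 ↔ c = 0 := by
  constructor
  · intro h
    have := ZMod.injective_stdAddChar (N := n) (a₁ := c) (a₂ := 0)
    simp at this
    exact this h
  · rintro rfl; exact AddChar.map_zero_eq_one _

lemma Tsum (n : ℕ) [NeZero n] (e : ℕ) (he : e ∣ n) (he0 : 0 < e) (k : ZMod n) :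
    ∑ x : ZMod n, (if e ∣ x.val then ZMod.stdAddChar (k * x) else 0)
      = if n / e ∣ k.val then ((n / e : ℕ) : ℂ) else 0 := by
  have hen : e * (n / e) = n := Nat.mul_div_cancel' he
  rw [← Finset.sum_filter]
  have hbij : ∑ x ∈ univ.filter (fun x : ZMod n => e ∣ x.val), ZMod.stdAddChar (k * x)
      = ∑ t ∈ Finset.range (n / e), ZMod.stdAddChar (k * ((e * t : ℕ) : ZMod n)) := by
    refine Finset.sum_nbij' (fun x : ZMod n => x.val / e) (fun t : ℕ => ((e * t : ℕ) : ZMod n))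
      ?_ ?_ ?_ ?_ ?_
    · intro x hx
      simp only [mem_filter, mem_univ, true_and] at hx
      simp only [Finset.mem_range]
      have hxlt : x.val < n := ZMod.val_lt x
      have : e * (x.val / e) < e * (n / e) := by
        rw [Nat.mul_div_cancel' hx, hen]; exact hxlt
      exact lt_of_mul_lt_mul_left this (Nat.zero_le e)
    · intro t ht
      simp only [Finset.mem_range] at ht
      have hlt : e * t < n := by
        calc e * t < e * (n / e) := (Nat.mul_lt_mul_left he0).mpr ht
        _ = n := hen
      simp only [mem_filter, mem_univ, true_and]
      rw [ZMod.val_natCast_of_lt hlt]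
      exact Dvd.intro t rfl
    · intro x hx
      simp only [mem_filter, mem_univ, true_and] at hx
      show ((e * (x.val / e) : ℕ) : ZMod n) = x
      rw [Nat.mul_div_cancel' hx, ZMod.natCast_zmod_val]
    · intro t ht
      simp only [Finset.mem_range] at ht
      have hlt : e * t < n := by
        calc e * t < e * (n / e) := (Nat.mul_lt_mul_left he0).mpr ht
        _ = n := hen
      show ((e * t : ℕ) : ZMod n).val / e = t
      rw [ZMod.val_natCast_of_lt hlt, Nat.mul_div_cancel_left t he0]
    · intro x hx
      simp only [mem_filter, mem_univ, true_and] at hx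
      show ZMod.stdAddChar (k * x) = ZMod.stdAddChar (k * ((e * (x.val / e) : ℕ) : ZMod n))
      rw [Nat.mul_div_cancel' hx, ZMod.natCast_zmod_val]
  rw [hbij]
  have hterm : ∀ t : ℕ, ZMod.stdAddChar (k * ((e * t : ℕ) : ZMod n))
      = (ZMod.stdAddChar (k * (e : ZMod n))) ^ t := by
    intro t
    rw [← AddChar.map_nsmul_eq_pow]
    congr 1
    rw [nsmul_eq_mul]
    push_cast
    ring
  simp_rw [hterm]
  set ρ := ZMod.stdAddChar (k * (e : ZMod n)) with hρ
  have hρpow : ρ ^ (n / e) = 1 := by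
    rw [hρ, ← AddChar.map_nsmul_eq_pow]
    have h0 : (n / e) • (k * (e : ZMod n)) = 0 := by
      have hz : ((e * (n / e) : ℕ) : ZMod n) = 0 := by rw [hen]; simp
      rw [nsmul_eq_mul]
      calc ((n / e : ℕ) : ZMod n) * (k * (e : ZMod n))
          = k * ((e * (n / e) : ℕ) : ZMod n) := by push_cast; ring
        _ = 0 := by rw [hz, mul_zero]
    rw [h0, AddChar.map_zero_eq_one]
  have hρ1 : ρ = 1 ↔ n / e ∣ k.val := by
    rw [hρ, chi_eq_one_iff]
    have hke : k * (e : ZMod n) = ((k.val * e : ℕ) : ZMod n) := by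
      push_cast
      rw [ZMod.natCast_zmod_val]
    rw [hke, ZMod.natCast_eq_zero_iff]
    constructor
    · intro h
      have h2 : (n / e) * e ∣ k.val * e := by rwa [Nat.div_mul_cancel he]
      exact (Nat.mul_dvd_mul_iff_right he0).mp h2
    · intro h
      have := Nat.mul_dvd_mul_right h e
      rwa [Nat.div_mul_cancel he] at this
  by_cases hc : ρ = 1
  · rw [if_pos (hρ1.mp hc)]
    simp [hc]
  · rw [if_neg (fun h => hc (hρ1.mpr h))]
    have hg := geom_sum_eq hc (n / e)
    rw [hg, hρpow]
    simp

lemma filter_dvd_divisors (m z : ℕ) (hm : m ≠ 0) :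
    m.divisors.filter (· ∣ z) = (Nat.gcd m z).divisors := by
  ext e
  simp only [Finset.mem_filter, Nat.mem_divisors, Nat.dvd_gcd_iff]
  exact ⟨fun ⟨⟨h1, _⟩, h3⟩ => ⟨⟨h1, h3⟩, fun h0 => hm (Nat.eq_zero_of_gcd_eq_zero_left h0)⟩,
    fun ⟨⟨h1, h3⟩, _⟩ => ⟨⟨h1, hm⟩, h3⟩⟩

lemma sum_moebius_divisors (x : ℕ) :
    (∑ e ∈ x.divisors, ArithmeticFunction.moebius e : ℤ) = if x = 1 then 1 else 0 := by
  have h := ArithmeticFunction.coe_mul_zeta_apply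
    (f := (ArithmeticFunction.moebius : ArithmeticFunction ℤ)) (x := x)
  rw [ArithmeticFunction.moebius_mul_coe_zeta] at h
  rw [← h, ArithmeticFunction.one_apply]

lemma moebius_indicator (m d y : ℕ) (hm : m ≠ 0) (hd0 : 0 < d) :
    (∑ e ∈ m.divisors, (ArithmeticFunction.moebius e : ℤ) * (if d * e ∣ y then 1 else 0))
      = if Nat.gcd y (d * m) = d then 1 else 0 := by
  by_cases hdy : d ∣ y
  · obtain ⟨z, rfl⟩ := hdy
    have hd' : d ≠ 0 := hd0.ne'
    simp_rw [mul_dvd_mul_iff_left hd', mul_ite, mul_one, mul_zero]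
    rw [← Finset.sum_filter, filter_dvd_divisors _ _ hm, sum_moebius_divisors, Nat.gcd_mul_left]
    refine if_congr ?_ rfl rfl
    rw [Nat.gcd_comm]
    constructor
    · intro h; rw [h, mul_one]
    · intro h; exact Nat.eq_of_mul_eq_mul_left hd0 (by rw [h, mul_one])
  · have h1 : ∀ e, ¬ (d * e ∣ y) := fun e hdvd => hdy (dvd_trans (Dvd.intro e rfl) hdvd)
    simp only [h1, if_false, mul_zero, Finset.sum_const_zero]
    rw [if_neg]
    intro h
    exact hdy (h ▸ Nat.gcd_dvd_left y (d * m))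

lemma Rsum (n : ℕ) [NeZero n] (d : ℕ) (hd : d ∣ n) (hd0 : 0 < d) (k : ZMod n)
    (Tsum : ∀ e : ℕ, e ∣ n → 0 < e →
      (∑ x : ZMod n, (if e ∣ x.val then ZMod.stdAddChar (k * x) else 0))
        = if n / e ∣ k.val then ((n / e : ℕ) : ℂ) else 0) :
    (∑ x : ZMod n, if Nat.gcd x.val n = d then ZMod.stdAddChar (k * x) else 0)
      = ∑ e ∈ (n / d).divisors, (ArithmeticFunction.moebius e : ℂ) *
          (if n / (d * e) ∣ k.val then ((n / (d * e) : ℕ) : ℂ) else 0) := by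
  have hn0 : n ≠ 0 := NeZero.ne n
  have hdm : d * (n / d) = n := Nat.mul_div_cancel' hd
  have hstep : ∀ e ∈ (n / d).divisors,
      (ArithmeticFunction.moebius e : ℂ) *
          (if n / (d * e) ∣ k.val then ((n / (d * e) : ℕ) : ℂ) else 0)
        = ∑ x : ZMod n, (ArithmeticFunction.moebius e : ℂ) *
            (if d * e ∣ x.val then ZMod.stdAddChar (k * x) else 0) := by
    intro e he
    rw [Nat.mem_divisors] at he
    have hde : d * e ∣ n := by
      obtain ⟨c, hc⟩ := he.1
      exact ⟨c, by rw [← hdm, hc]; ring⟩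
    have hde0 : 0 < d * e := by
      rcases Nat.eq_zero_or_pos e with h | h
      · exact absurd (by simpa [h] using he.1) he.2
      · exact Nat.mul_pos hd0 h
    rw [← Finset.mul_sum, Tsum (d * e) hde hde0]
  rw [Finset.sum_congr rfl hstep, Finset.sum_comm]
  refine Finset.sum_congr rfl fun x _ => ?_
  have hm0 : n / d ≠ 0 := by
    intro h
    rw [h, mul_zero] at hdm
    exact hn0 hdm.symm
  have keyz := moebius_indicator (n / d) d x.val hm0 hd0
  rw [hdm] at keyz
  have key : (∑ e ∈ (n / d).divisors, (ArithmeticFunction.moebius e : ℂ) *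
      (if d * e ∣ x.val then 1 else 0)) = if Nat.gcd x.val n = d then 1 else 0 := by
    have := congrArg (Int.cast : ℤ → ℂ) keyz
    push_cast at this
    convert this using 2
  calc (if Nat.gcd x.val n = d then ZMod.stdAddChar (k * x) else 0)
      = (if Nat.gcd x.val n = d then (1:ℂ) else 0) * ZMod.stdAddChar (k * x) := by
        split <;> simp
    _ = (∑ e ∈ (n / d).divisors, (ArithmeticFunction.moebius e : ℂ) *
          (if d * e ∣ x.val then 1 else 0)) * ZMod.stdAddChar (k * x) := by rw [key]
    _ = ∑ e ∈ (n / d).divisors, (ArithmeticFunction.moebius e : ℂ) *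
          (if d * e ∣ x.val then ZMod.stdAddChar (k * x) else 0) := by
        rw [Finset.sum_mul]
        refine Finset.sum_congr rfl fun e _ => ?_
        split <;> ring

lemma coprime_two_of_odd {a : ℕ} (h : ¬ 2 ∣ a) : Nat.Coprime 2 a :=
  (Nat.Prime.coprime_iff_not_dvd Nat.prime_two).mpr h

lemma coprime_four_of_odd {a : ℕ} (h : ¬ 2 ∣ a) : Nat.Coprime 4 a := by
  have := (coprime_two_of_odd h).pow_left 2
  norm_num at this
  exact this

lemma coprime_eight_of_odd {a : ℕ} (h : ¬ 2 ∣ a) : Nat.Coprime 8 a := by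
  have := (coprime_two_of_odd h).pow_left 3
  norm_num at this
  exact this

lemma moebius_two_mul (c : ℕ) (hc : ¬ 2 ∣ c) :
    ArithmeticFunction.moebius (2 * c) = - ArithmeticFunction.moebius c := by
  rw [ArithmeticFunction.isMultiplicative_moebius.map_mul_of_coprime (coprime_two_of_odd hc),
    ArithmeticFunction.moebius_apply_prime Nat.prime_two]
  ring

lemma four_dvd_div {m e : ℕ} (hm8 : 8 ∣ m) (hem : e ∣ m) (hsf : Squarefree e) :
    4 ∣ m / e := by
  have he0 : e ≠ 0 := hsf.ne_zero
  have hme : e * (m / e) = m := Nat.mul_div_cancel' hem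
  by_cases h2 : 2 ∣ e
  · obtain ⟨e1, he⟩ := h2
    have he1odd : ¬ 2 ∣ e1 := by
      intro ⟨e2, he2⟩
      have := hsf 2 ⟨e2, by rw [he, he2]; ring⟩
      rw [Nat.isUnit_iff] at this
      norm_num at this
    have h8 : 2 * 4 ∣ 2 * (e1 * (m / e)) := by
      have : e * (m / e) = 2 * (e1 * (m / e)) := by rw [he]; ring
      rw [← this, hme]
      exact hm8
    have h4 : 4 ∣ e1 * (m / e) := (Nat.mul_dvd_mul_iff_left (by norm_num : 0 < 2)).mp h8
    exact (coprime_four_of_odd he1odd).dvd_of_dvd_mul_left h4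
  · have h8q : 8 ∣ m / e := by
      refine (Nat.Coprime.dvd_of_dvd_mul_left (coprime_eight_of_odd h2)) ?_
      rw [hme]; exact hm8
    exact dvd_trans (by norm_num) h8q

lemma coeff_identity (u c : ℕ) (hodd : ¬ 2 ∣ u) (hc : c ∣ 4 * u) :
    (ArithmeticFunction.moebius c : ℤ)
        + (if 2 ∣ c then (ArithmeticFunction.moebius (c / 2) : ℤ) else 0)
        + (if 4 ∣ c then (ArithmeticFunction.moebius (c / 4) : ℤ) else 0)
      = if ¬ 2 ∣ c then (ArithmeticFunction.moebius c : ℤ) else 0 := by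
  by_cases h2 : 2 ∣ c
  · rw [if_neg (not_not_intro h2)]
    by_cases h4 : 4 ∣ c
    · rw [if_pos h2, if_pos h4]
      obtain ⟨c2, rfl⟩ := h4
      have hc2odd : ¬ 2 ∣ c2 := by
        intro ⟨c3, hc3⟩
        have h8 : 4 * (2 * c3) ∣ 4 * u := by rw [← hc3]; exact hc
        have := (Nat.mul_dvd_mul_iff_left (by norm_num : 0 < 4)).mp h8
        exact hodd (dvd_trans ⟨c3, rfl⟩ this)
      have e1 : 4 * c2 / 2 = 2 * c2 := by omega
      have e2 : 4 * c2 / 4 = c2 := by omega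
      have hns : ¬ Squarefree (4 * c2) := by
        intro hs
        have := hs 2 ⟨c2, by ring⟩
        rw [Nat.isUnit_iff] at this
        norm_num at this
      rw [e1, e2, moebius_two_mul c2 hc2odd,
        ArithmeticFunction.moebius_eq_zero_of_not_squarefree hns]
      push_cast
      ring
    · rw [if_pos h2, if_neg h4]
      obtain ⟨c1, rfl⟩ := h2
      have hc1odd : ¬ 2 ∣ c1 := by
        intro ⟨c3, hc3⟩
        exact h4 ⟨c3, by omega⟩
      have e1 : 2 * c1 / 2 = c1 := by omega
      rw [e1, moebius_two_mul c1 hc1odd]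
      push_cast
      ring
  · rw [if_neg h2, if_neg (fun h4 => h2 (dvd_trans (by norm_num) h4)), if_pos h2]
    ring

lemma triple_sum (u : ℕ) (hu0 : u ≠ 0) (hodd : ¬ 2 ∣ u) (g : ℕ → ℂ) :
    ((∑ e ∈ (4 * u).divisors, (ArithmeticFunction.moebius e : ℂ) * g e)
      + ∑ e ∈ (2 * u).divisors, (ArithmeticFunction.moebius e : ℂ) * g (2 * e))
      + ∑ e ∈ u.divisors, (ArithmeticFunction.moebius e : ℂ) * g (4 * e)
    = ∑ e ∈ u.divisors, (ArithmeticFunction.moebius e : ℂ) * g e := by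
  have h4u0 : 4 * u ≠ 0 := by positivity
  -- reindex the second sum
  have h2 : (∑ e ∈ (2 * u).divisors, (ArithmeticFunction.moebius e : ℂ) * g (2 * e))
      = ∑ c ∈ (4 * u).divisors,
          (if 2 ∣ c then (ArithmeticFunction.moebius (c / 2) : ℂ) * g c else 0) := by
    rw [← Finset.sum_filter]
    refine Finset.sum_nbij' (fun e => 2 * e) (fun c => c / 2) ?_ ?_ ?_ ?_ ?_
    · intro e he
      rw [Nat.mem_divisors] at he
      simp only [Finset.mem_filter, Nat.mem_divisors]
      refine ⟨⟨?_, h4u0⟩, ⟨e, rfl⟩⟩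
      obtain ⟨t, ht⟩ := he.1
      exact ⟨t, by rw [show 4 * u = 2 * (2 * u) by ring, ht]; ring⟩
    · intro c hcm
      simp only [Finset.mem_filter, Nat.mem_divisors] at hcm
      obtain ⟨⟨hcd, _⟩, c1, rfl⟩ := hcm
      rw [Nat.mem_divisors]
      refine ⟨?_, by positivity⟩
      have : 2 * c1 ∣ 2 * (2 * u) := by rw [show 2 * (2 * u) = 4 * u by ring]; exact hcd
      have := (Nat.mul_dvd_mul_iff_left (by norm_num : 0 < 2)).mp this
      simpa [Nat.mul_div_cancel_left] using (by omega : 2 * c1 / 2 = c1) ▸ this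
    · intro e _; show 2 * e / 2 = e; omega
    · intro c hcm
      simp only [Finset.mem_filter, Nat.mem_divisors] at hcm
      obtain ⟨_, c1, rfl⟩ := hcm
      show 2 * (2 * c1 / 2) = 2 * c1; omega
    · intro e _
      show (ArithmeticFunction.moebius e : ℂ) * g (2 * e)
        = (ArithmeticFunction.moebius (2 * e / 2) : ℂ) * g (2 * e)
      have : 2 * e / 2 = e := by omega
      rw [this]
  -- reindex the third sum
  have h3 : (∑ e ∈ u.divisors, (ArithmeticFunction.moebius e : ℂ) * g (4 * e))
      = ∑ c ∈ (4 * u).divisors,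
          (if 4 ∣ c then (ArithmeticFunction.moebius (c / 4) : ℂ) * g c else 0) := by
    rw [← Finset.sum_filter]
    refine Finset.sum_nbij' (fun e => 4 * e) (fun c => c / 4) ?_ ?_ ?_ ?_ ?_
    · intro e he
      rw [Nat.mem_divisors] at he
      simp only [Finset.mem_filter, Nat.mem_divisors]
      exact ⟨⟨Nat.mul_dvd_mul_left 4 he.1, h4u0⟩, ⟨e, rfl⟩⟩
    · intro c hcm
      simp only [Finset.mem_filter, Nat.mem_divisors] at hcm
      obtain ⟨⟨hcd, _⟩, c1, rfl⟩ := hcm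
      rw [Nat.mem_divisors]
      have : 4 * c1 ∣ 4 * u := hcd
      have := (Nat.mul_dvd_mul_iff_left (by norm_num : 0 < 4)).mp this
      refine ⟨by simpa using (by omega : 4 * c1 / 4 = c1) ▸ this, hu0⟩
    · intro e _; show 4 * e / 4 = e; omega
    · intro c hcm
      simp only [Finset.mem_filter, Nat.mem_divisors] at hcm
      obtain ⟨_, c1, rfl⟩ := hcm
      show 4 * (4 * c1 / 4) = 4 * c1; omega
    · intro e _
      show (ArithmeticFunction.moebius e : ℂ) * g (4 * e)
        = (ArithmeticFunction.moebius (4 * e / 4) : ℂ) * g (4 * e)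
      have : 4 * e / 4 = e := by omega
      rw [this]
  -- reindex RHS
  have h1 : (∑ e ∈ u.divisors, (ArithmeticFunction.moebius e : ℂ) * g e)
      = ∑ c ∈ (4 * u).divisors,
          (if ¬ 2 ∣ c then (ArithmeticFunction.moebius c : ℂ) * g c else 0) := by
    rw [← Finset.sum_filter]
    refine Finset.sum_nbij' (fun c => c) (fun c => c) ?_ ?_ ?_ ?_ ?_
    · intro e he
      rw [Nat.mem_divisors] at he
      simp only [Finset.mem_filter, Nat.mem_divisors]
      exact ⟨⟨dvd_trans he.1 ⟨4, by ring⟩, h4u0⟩,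
        fun h2e => hodd (dvd_trans h2e he.1)⟩
    · intro c hcm
      simp only [Finset.mem_filter, Nat.mem_divisors] at hcm ⊢
      obtain ⟨⟨hcd, _⟩, hcodd⟩ := hcm
      exact ⟨(coprime_four_of_odd hcodd).symm.dvd_of_dvd_mul_left hcd, hu0⟩
    · intro e _; rfl
    · intro c _; rfl
    · intro e _; rfl
  rw [h2, h3, h1, ← Finset.sum_add_distrib, ← Finset.sum_add_distrib]
  refine Finset.sum_congr rfl fun c hcm => ?_
  rw [Nat.mem_divisors] at hcm
  have hz := coeff_identity u c hodd hcm.1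
  have hzc := congrArg (fun z : ℤ => (z : ℂ) * g c) hz
  simp only [Int.cast_add, Int.cast_zero, apply_ite (fun z : ℤ => (z : ℂ))] at hzc
  calc (ArithmeticFunction.moebius c : ℂ) * g c
        + (if 2 ∣ c then (ArithmeticFunction.moebius (c / 2) : ℂ) * g c else 0)
        + (if 4 ∣ c then (ArithmeticFunction.moebius (c / 4) : ℂ) * g c else 0)
      = ((ArithmeticFunction.moebius c : ℂ)
          + (if 2 ∣ c then (ArithmeticFunction.moebius (c / 2) : ℂ) else 0)
          + (if 4 ∣ c then (ArithmeticFunction.moebius (c / 4) : ℂ) else 0)) * g c := by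
        split_ifs <;> ring
    _ = (if ¬ 2 ∣ c then (ArithmeticFunction.moebius c : ℂ) else 0) * g c := by
        convert hzc using 2 <;> push_cast <;> ring
    _ = (if ¬ 2 ∣ c then (ArithmeticFunction.moebius c : ℂ) * g c else 0) := by
        split_ifs <;> ring

lemma dprime_facts {n d' : ℕ} (hn : n ≠ 0) (h1 : d' ∣ n) (h2 : n / d' % 8 = 4) :
    4 * d' ∣ n ∧ 2 * d' ∣ n ∧ n / (2 * d') % 4 = 2 ∧ n / (4 * d') % 2 = 1
      ∧ n / d' = 4 * (n / (4 * d')) ∧ n / (2 * d') = 2 * (n / (4 * d')) := by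
  obtain ⟨q, hq⟩ := h1
  have hd0 : d' ≠ 0 := by rintro rfl; rw [zero_mul] at hq; exact hn hq
  have hqval : n / d' = q := by rw [hq]; exact Nat.mul_div_cancel_left q (Nat.pos_of_ne_zero hd0)
  rw [hqval] at h2
  obtain ⟨j, hj⟩ : ∃ j, q = 8 * j + 4 := ⟨q / 8, by omega⟩
  have e2 : n / (2 * d') = 4 * j + 2 := by
    rw [hq, hj, show d' * (8 * j + 4) = (2 * d') * (4 * j + 2) by ring]
    exact Nat.mul_div_cancel_left _ (by omega)
  have e4 : n / (4 * d') = 2 * j + 1 := by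
    rw [hq, hj, show d' * (8 * j + 4) = (4 * d') * (2 * j + 1) by ring]
    exact Nat.mul_div_cancel_left _ (by omega)
  refine ⟨⟨2 * j + 1, by rw [hq, hj]; ring⟩, ⟨4 * j + 2, by rw [hq, hj]; ring⟩, by omega,
    by omega, by omega, by omega⟩

lemma sum_four_dvd {α : Type*} {s : Finset α} {f : α → ℂ}
    (h : ∀ i ∈ s, ∃ z : ℤ, f i = 4 * z) : ∃ z : ℤ, ∑ i ∈ s, f i = 4 * z := by
  classical
  induction s using Finset.induction_on with
  | empty => exact ⟨0, by simp⟩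
  | insert _ _ hx ih =>
      obtain ⟨z1, hz1⟩ := h _ (Finset.mem_insert_self _ _)
      obtain ⟨z2, hz2⟩ := ih fun i hi => h i (Finset.mem_insert_of_mem hi)
      exact ⟨z1 + z2, by rw [Finset.sum_insert hx, hz1, hz2]; push_cast; ring⟩

lemma term_four_dvd (q : ℕ) (w : ℤ) (P : Prop) [Decidable P] (hq : w ≠ 0 → 4 ∣ q) :
    ∃ z : ℤ, (w : ℂ) * (if P then (q : ℂ) else 0) = 4 * z := by
  by_cases hw : w = 0
  · exact ⟨0, by simp [hw]⟩
  by_cases hP : P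
  · refine ⟨w * ((q / 4 : ℕ) : ℤ), ?_⟩
    rw [if_pos hP]
    obtain ⟨t, ht⟩ := hq hw
    rw [ht, Nat.mul_div_cancel_left t (by norm_num : 0 < 4)]
    push_cast
    ring
  · exact ⟨0, by simp [hP]⟩

lemma matrix_exp_one (n : ℕ) [NeZero n] (ind : ZMod n → ℂ)
    (hlam : ∀ k : ZMod n, ∃ z : ℤ,
      (∑ s : ZMod n, ind s * ZMod.stdAddChar (s * k)) = 4 * z) :
    NormedSpace.exp ((Complex.I * ((Real.pi / 2 : ℝ) : ℂ)) •
      Matrix.of (fun a b : ZMod n => ind (a - b))) = 1 := by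
  set χ : AddChar (ZMod n) ℂ := ZMod.stdAddChar with hχ
  set lam : ZMod n → ℂ := fun k => ∑ s : ZMod n, ind s * χ (s * k) with hlamdef
  set A : Matrix (ZMod n) (ZMod n) ℂ := Matrix.of (fun a b : ZMod n => ind (a - b)) with hA
  set F : Matrix (ZMod n) (ZMod n) ℂ := Matrix.of (fun a k : ZMod n => χ (-(a * k))) with hF
  set Finv : Matrix (ZMod n) (ZMod n) ℂ :=
    Matrix.of (fun k b : ZMod n => (n : ℂ)⁻¹ * χ (k * b)) with hFinvdef
  have hn0 : (n : ℂ) ≠ 0 := Nat.cast_ne_zero.mpr (NeZero.ne n)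
  -- F * Finv = 1
  have hFinv : F * Finv = 1 := by
    ext a b
    simp only [Matrix.mul_apply, hF, hFinvdef, Matrix.of_apply]
    have : ∀ k : ZMod n, χ (-(a * k)) * ((n : ℂ)⁻¹ * χ (k * b))
        = (n : ℂ)⁻¹ * χ (k * (b - a)) := by
      intro k
      rw [show k * (b - a) = -(a * k) + k * b by ring, AddChar.map_add_eq_mul]
      ring
    simp_rw [this, ← Finset.mul_sum]
    rw [hχ, AddChar.sum_mulShift (b - a) (ZMod.isPrimitive_stdAddChar n)]
    by_cases hab : a = b
    · simp [hab, ZMod.card, Matrix.one_apply, hn0]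
    · have : ¬ (b - a = 0) := fun h => hab (by linear_combination -h)
      rw [if_neg this]
      simp [Matrix.one_apply, hab]
  have hunitF : IsUnit F := ⟨⟨F, Finv, hFinv, mul_eq_one_comm.mp hFinv⟩, rfl⟩
  have hdetF : IsUnit F.det := (Matrix.isUnit_iff_isUnit_det F).mp hunitF
  have hFinv' : F⁻¹ = Finv := Matrix.inv_eq_right_inv hFinv
  -- A * F = F * diagonal lam
  have hAF : A * F = F * Matrix.diagonal lam := by
    ext a k
    rw [Matrix.mul_apply, Matrix.mul_diagonal]
    simp only [hA, hF, Matrix.of_apply]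
    calc ∑ b : ZMod n, ind (a - b) * χ (-(b * k))
        = ∑ s : ZMod n, ind (a - (a - s)) * χ (-((a - s) * k)) := by
          refine (Fintype.sum_equiv (Equiv.subLeft a) _ _ fun s => ?_).symm
          simp [Equiv.subLeft]
      _ = ∑ s : ZMod n, χ (-(a * k)) * (ind s * χ (s * k)) := by
          refine Fintype.sum_congr _ _ fun s => ?_
          have h1 : a - (a - s) = s := by ring
          rw [h1, show -((a - s) * k) = -(a * k) + s * k by ring, AddChar.map_add_eq_mul]
          ring
      _ = χ (-(a * k)) * lam k := by rw [← Finset.mul_sum]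
  have hAconj : A = F * Matrix.diagonal lam * F⁻¹ := by
    calc A = A * (F * F⁻¹) := by rw [Matrix.mul_nonsing_inv F hdetF, Matrix.mul_one]
      _ = (A * F) * F⁻¹ := by rw [Matrix.mul_assoc]
      _ = F * Matrix.diagonal lam * F⁻¹ := by rw [hAF]
  set c : ℂ := Complex.I * ((Real.pi / 2 : ℝ) : ℂ) with hc
  have hd : Matrix.diagonal (fun k => c * lam k) = c • Matrix.diagonal lam := by
    rw [← Matrix.diagonal_smul]
    rfl
  have hsmul : c • A = F * Matrix.diagonal (fun k => c * lam k) * F⁻¹ := by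
    rw [hAconj, hd, Matrix.mul_smul, Matrix.smul_mul]
  rw [hsmul, Matrix.exp_conj F _ hunitF, Matrix.exp_diagonal]
  have hdiag : (NormedSpace.exp fun k => c * lam k) = fun _ : ZMod n => (1 : ℂ) := by
    funext k
    simp only [Pi.coe_exp]
    obtain ⟨z, hz⟩ := hlam k
    have : c * lam k = (z : ℂ) * (2 * Real.pi * Complex.I) := by
      show c * (∑ s : ZMod n, ind s * χ (s * k)) = _
      rw [hz, hc]
      push_cast
      ring
    rw [this, ← Complex.exp_eq_exp_ℂ, Complex.exp_int_mul_two_pi_mul_I]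
  rw [hdiag, Matrix.diagonal_one, Matrix.mul_one, Matrix.mul_nonsing_inv F hdetF]

lemma icg_connected (n : ℕ) [NeZero n] (D : Set ℕ)
    (hD : ∀ d ∈ D, 0 < d ∧ d ∣ n)
    (hgen : AddSubgroup.closure {x : ZMod n | ∃ d ∈ D, x = (d : ZMod n)} = ⊤) :
    (SimpleGraph.fromRel fun x y : ZMod n => Nat.gcd (x - y).val n ∈ D).Connected := by
  set G := SimpleGraph.fromRel fun x y : ZMod n => Nat.gcd (x - y).val n ∈ D with hG
  -- translation respects adjacency
  have htrans : ∀ (t x y : ZMod n), G.Adj x y → G.Adj (x + t) (y + t) := by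
    intro t x y hxy
    rw [hG, SimpleGraph.fromRel_adj] at hxy ⊢
    refine ⟨fun h => hxy.1 (by linear_combination h), ?_⟩
    have h1 : x + t - (y + t) = x - y := by ring
    have h2 : y + t - (x + t) = y - x := by ring
    rw [h1, h2]
    exact hxy.2
  have hreach : ∀ (t x y : ZMod n), G.Reachable x y → G.Reachable (x + t) (y + t) := by
    intro t x y h
    exact h.map (⟨fun z => z + t, fun hz => htrans t _ _ hz⟩ : G →g G)
  have key : ∀ v : ZMod n, G.Reachable 0 v := by
    intro v
    have hv : v ∈ AddSubgroup.closure {x : ZMod n | ∃ d ∈ D, x = (d : ZMod n)} := by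
      rw [hgen]; trivial
    refine AddSubgroup.closure_induction ?_ ?_ ?_ ?_ hv
    · rintro x ⟨d, hdD, rfl⟩
      obtain ⟨hd0, hdn⟩ := hD d hdD
      by_cases hdn' : d = n
      · subst hdn'
        simp only [ZMod.natCast_self]
        exact SimpleGraph.Reachable.refl 0
      · have hdlt : d < n := lt_of_le_of_ne (Nat.le_of_dvd (Nat.pos_of_ne_zero (NeZero.ne n)) hdn) hdn'
        have hval : ((d : ZMod n)).val = d := ZMod.val_natCast_of_lt hdlt
        have hne : (d : ZMod n) ≠ 0 := by
          intro h
          rw [h, ZMod.val_zero] at hval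
          omega
        refine SimpleGraph.Adj.reachable ?_
        rw [hG, SimpleGraph.fromRel_adj]
        refine ⟨fun h => hne h.symm, Or.inr ?_⟩
        rw [sub_zero, hval, Nat.gcd_eq_left hdn]
        exact hdD
    · exact SimpleGraph.Reachable.refl 0
    · intro x y _ _ hx hy
      have := hreach x 0 y hy
      rw [zero_add] at this
      exact hx.trans (by rwa [add_comm] at this)
    · intro x _ hx
      have := hreach (-x) 0 x hx
      rw [zero_add, add_neg_cancel] at this
      exact this.symm
  constructor
  · intro u v
    have := hreach u 0 (v - u) (key (v - u))
    rwa [zero_add, sub_add_cancel] at this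

lemma lam_div (n : ℕ) [NeZero n] (D : Set ℕ) (hpos : ∀ d ∈ D, 0 < d ∧ d ∣ n)
    (Dt D' : Set ℕ)
    (hDt : Dt ⊆ {d : ℕ | d ∣ n ∧ n / d % 8 = 0})
    (hD' : D' ⊆ {d : ℕ | d ∣ n ∧ n / d % 8 = 4})
    (hDeq : D = Dt ∪ D' ∪ (fun d => 2 * d) '' D' ∪ (fun d => 4 * d) '' D')
    (k : ZMod n) :
    ∃ z : ℤ, (∑ s : ZMod n,
        ({x : ZMod n | Nat.gcd x.val n ∈ D}.indicator (fun _ => (1 : ℂ)) s)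
          * ZMod.stdAddChar (s * k)) = 4 * z := by
  classical
  have hn0 : n ≠ 0 := NeZero.ne n
  set Rf : ℕ → ℂ := fun d => ∑ x : ZMod n,
    (if Nat.gcd x.val n = d then ZMod.stdAddChar (k * x) else 0) with hRf
  set DF := n.divisors.filter (· ∈ D) with hDF
  -- Step 1: the sum equals ∑ d ∈ DF, Rf d
  have hstep1 : (∑ s : ZMod n,
        ({x : ZMod n | Nat.gcd x.val n ∈ D}.indicator (fun _ => (1 : ℂ)) s)
          * ZMod.stdAddChar (s * k)) = ∑ d ∈ DF, Rf d := by
    rw [hRf, Finset.sum_comm]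
    refine Fintype.sum_congr _ _ fun x => ?_
    rw [Finset.sum_ite_eq DF (Nat.gcd x.val n) (fun _ => ZMod.stdAddChar (k * x))]
    have hmem : Nat.gcd x.val n ∈ DF ↔ Nat.gcd x.val n ∈ D := by
      rw [hDF, Finset.mem_filter, Nat.mem_divisors]
      exact ⟨fun h => h.2, fun h => ⟨⟨Nat.gcd_dvd_right _ _, hn0⟩, h⟩⟩
    by_cases h : Nat.gcd x.val n ∈ D
    · rw [if_pos (hmem.mpr h), Set.indicator_of_mem (show x ∈ _ from h), one_mul, mul_comm]
    · rw [if_neg (fun hc => h (hmem.mp hc)),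
        Set.indicator_of_notMem (show x ∉ _ from h), zero_mul]
  rw [hstep1]
  -- Step 2: partition DF
  set A1 := n.divisors.filter (· ∈ Dt) with hA1
  set A2 := n.divisors.filter (· ∈ D') with hA2
  have hA1mem : ∀ d ∈ A1, d ∣ n ∧ n / d % 8 = 0 := by
    intro d hd
    rw [hA1, Finset.mem_filter] at hd
    exact ⟨(Nat.mem_divisors.mp hd.1).1, (hDt hd.2).2⟩
  have hA2mem : ∀ d ∈ A2, d ∣ n ∧ n / d % 8 = 4 := by
    intro d hd
    rw [hA2, Finset.mem_filter] at hd
    exact ⟨(Nat.mem_divisors.mp hd.1).1, (hD' hd.2).2⟩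
  have hres3 : ∀ d ∈ A2.image (fun d => 2 * d), n / d % 4 = 2 := by
    intro d hd
    rw [Finset.mem_image] at hd
    obtain ⟨d', hd', rfl⟩ := hd
    obtain ⟨hd'n, hres⟩ := hA2mem d' hd'
    exact (dprime_facts hn0 hd'n hres).2.2.1
  have hres4 : ∀ d ∈ A2.image (fun d => 4 * d), n / d % 2 = 1 := by
    intro d hd
    rw [Finset.mem_image] at hd
    obtain ⟨d', hd', rfl⟩ := hd
    obtain ⟨hd'n, hres⟩ := hA2mem d' hd'
    exact (dprime_facts hn0 hd'n hres).2.2.2.1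
  have hDFsplit : DF = (A1 ∪ A2) ∪
      (A2.image (fun d => 2 * d) ∪ A2.image (fun d => 4 * d)) := by
    ext d
    simp only [hDF, hA1, hA2, Finset.mem_union, Finset.mem_filter, Finset.mem_image,
      Nat.mem_divisors]
    constructor
    · rintro ⟨⟨hdn, _⟩, hdD⟩
      rw [hDeq] at hdD
      simp only [Set.mem_union, Set.mem_image] at hdD
      rcases hdD with ((h | h) | ⟨d', hd', rfl⟩) | ⟨d', hd', rfl⟩
      · exact Or.inl (Or.inl ⟨⟨hdn, hn0⟩, h⟩)
      · exact Or.inl (Or.inr ⟨⟨hdn, hn0⟩, h⟩)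
      · exact Or.inr (Or.inl ⟨d', ⟨⟨(hD' hd').1, hn0⟩, hd'⟩, rfl⟩)
      · exact Or.inr (Or.inr ⟨d', ⟨⟨(hD' hd').1, hn0⟩, hd'⟩, rfl⟩)
    · rintro ((⟨⟨hdn, _⟩, h⟩ | ⟨⟨hdn, _⟩, h⟩) |
        (⟨d', ⟨⟨hd'n, _⟩, hd'⟩, rfl⟩ | ⟨d', ⟨⟨hd'n, _⟩, hd'⟩, rfl⟩))
      · exact ⟨⟨hdn, hn0⟩, by rw [hDeq]; exact Or.inl (Or.inl (Or.inl h))⟩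
      · exact ⟨⟨hdn, hn0⟩, by rw [hDeq]; exact Or.inl (Or.inl (Or.inr h))⟩
      · refine ⟨⟨(dprime_facts hn0 hd'n (hD' hd').2).2.1, hn0⟩, ?_⟩
        rw [hDeq]
        exact Or.inl (Or.inr ⟨d', hd', rfl⟩)
      · refine ⟨⟨(dprime_facts hn0 hd'n (hD' hd').2).1, hn0⟩, ?_⟩
        rw [hDeq]
        exact Or.inr ⟨d', hd', rfl⟩
  have hdisj12 : Disjoint A1 A2 := by
    rw [Finset.disjoint_left]
    intro d h1 h2
    have := (hA1mem d h1).2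
    have := (hA2mem d h2).2
    omega
  have hdisj34 : Disjoint (A2.image (fun d => 2 * d)) (A2.image (fun d => 4 * d)) := by
    rw [Finset.disjoint_left]
    intro d h1 h2
    have := hres3 d h1
    have := hres4 d h2
    omega
  have hdisj : Disjoint (A1 ∪ A2) (A2.image (fun d => 2 * d) ∪ A2.image (fun d => 4 * d)) := by
    rw [Finset.disjoint_left]
    intro d hd hd'
    rcases Finset.mem_union.mp hd with h | h <;>
      rcases Finset.mem_union.mp hd' with h' | h'
    · have := (hA1mem d h).2; have := hres3 d h'; omega
    · have := (hA1mem d h).2; have := hres4 d h'; omega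
    · have := (hA2mem d h).2; have := hres3 d h'; omega
    · have := (hA2mem d h).2; have := hres4 d h'; omega
  have hinj2 : ∀ x ∈ A2, ∀ y ∈ A2, 2 * x = 2 * y → x = y := fun x _ y _ h => by omega
  have hinj4 : ∀ x ∈ A2, ∀ y ∈ A2, 4 * x = 4 * y → x = y := fun x _ y _ h => by omega
  rw [hDFsplit, Finset.sum_union hdisj, Finset.sum_union hdisj12, Finset.sum_union hdisj34,
    Finset.sum_image hinj2, Finset.sum_image hinj4]
  -- Step 3: divisibility of each chunk
  have hchunk1 : ∀ d ∈ A1, ∃ z : ℤ, Rf d = 4 * z := by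
    intro d hd
    obtain ⟨hdn, hres⟩ := hA1mem d hd
    have hd0 : 0 < d := Nat.pos_of_mem_divisors (Finset.mem_filter.mp hd).1
    show ∃ z : ℤ, (∑ x : ZMod n,
      if Nat.gcd x.val n = d then ZMod.stdAddChar (k * x) else 0) = 4 * z
    rw [Rsum n d hdn hd0 k (fun e he he0 => Tsum n e he he0 k)]
    refine sum_four_dvd fun e he => ?_
    refine term_four_dvd _ _ _ fun hw => ?_
    have hsf : Squarefree e := ArithmeticFunction.moebius_ne_zero_iff_squarefree.mp hw
    have h8 : 8 ∣ n / d := Nat.dvd_of_mod_eq_zero hres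
    have he' : e ∣ n / d := (Nat.mem_divisors.mp he).1
    have h4d := four_dvd_div h8 he' hsf
    rwa [Nat.div_div_eq_div_mul] at h4d
  have hchunk2 : ∀ d' ∈ A2, ∃ z : ℤ, Rf d' + Rf (2 * d') + Rf (4 * d') = 4 * z := by
    intro d' hd'
    obtain ⟨hd'n, hres⟩ := hA2mem d' hd'
    have hd'0 : 0 < d' := Nat.pos_of_mem_divisors (Finset.mem_filter.mp hd').1
    obtain ⟨h4dvd, h2dvd, hmod4, hmod2, hq4, hq2⟩ := dprime_facts hn0 hd'n hres
    set u := n / (4 * d') with hu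
    have hu0 : u ≠ 0 := by omega
    have huodd : ¬ 2 ∣ u := by omega
    set g : ℕ → ℂ := fun c =>
      if n / (d' * c) ∣ k.val then ((n / (d' * c) : ℕ) : ℂ) else 0 with hg
    have hr1 : Rf d' = ∑ e ∈ (4 * u).divisors, (ArithmeticFunction.moebius e : ℂ) * g e := by
      show (∑ x : ZMod n, if Nat.gcd x.val n = d' then ZMod.stdAddChar (k * x) else 0) = _
      rw [Rsum n d' hd'n hd'0 k (fun e he he0 => Tsum n e he he0 k), hq4]
    have hr2 : Rf (2 * d')
        = ∑ e ∈ (2 * u).divisors, (ArithmeticFunction.moebius e : ℂ) * g (2 * e) := by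
      show (∑ x : ZMod n,
        if Nat.gcd x.val n = 2 * d' then ZMod.stdAddChar (k * x) else 0) = _
      rw [Rsum n (2 * d') h2dvd (by omega) k (fun e he he0 => Tsum n e he he0 k), hq2]
      refine Finset.sum_congr rfl fun e _ => ?_
      rw [hg]
      have : 2 * d' * e = d' * (2 * e) := by ring
      rw [this]
    have hr3 : Rf (4 * d')
        = ∑ e ∈ u.divisors, (ArithmeticFunction.moebius e : ℂ) * g (4 * e) := by
      show (∑ x : ZMod n,
        if Nat.gcd x.val n = 4 * d' then ZMod.stdAddChar (k * x) else 0) = _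
      rw [Rsum n (4 * d') h4dvd (by omega) k (fun e he he0 => Tsum n e he he0 k)]
      refine Finset.sum_congr rfl fun e _ => ?_
      rw [hg]
      have : 4 * d' * e = d' * (4 * e) := by ring
      rw [this]
    rw [hr1, hr2, hr3, triple_sum u hu0 huodd g]
    refine sum_four_dvd fun e he => ?_
    have he' : e ∣ u := (Nat.mem_divisors.mp he).1
    have hval : n / (d' * e) = 4 * (u / e) := by
      rw [← Nat.div_div_eq_div_mul, hq4, Nat.mul_div_assoc 4 he']
    rw [hg]
    simp only
    rw [hval]
    exact term_four_dvd _ _ _ fun _ => ⟨u / e, rfl⟩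
  obtain ⟨z1, hz1⟩ := sum_four_dvd hchunk1
  obtain ⟨z2, hz2⟩ := sum_four_dvd hchunk2
  refine ⟨z1 + z2, ?_⟩
  have hcomb : ∑ d ∈ A1, Rf d + ∑ d ∈ A2, Rf d
      + (∑ d ∈ A2, Rf (2 * d) + ∑ d ∈ A2, Rf (4 * d))
      = ∑ d ∈ A1, Rf d + ∑ d' ∈ A2, (Rf d' + Rf (2 * d') + Rf (4 * d')) := by
    rw [Finset.sum_add_distrib, Finset.sum_add_distrib]
    ring
  rw [hcomb, hz1, hz2]
  push_cast
  ring

/-- Adjacency matrix of the Cayley graph `Cay(Γ, S)`: `a, b` adjacent iff `a - b ∈ S`. -/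
noncomputable def cayAdj {G : Type*} [AddGroup G] (S : Set G) : Matrix G G ℂ :=
  Matrix.of fun a b => S.indicator (fun _ => (1 : ℂ)) (a - b)

/-- Adjacency matrix of the integral circulant graph `ICG_n(D)`: the Cayley graph over `ℤ_n`
with connection set `∪_{d ∈ D} S_{ℤ_n}(d)`, where `S_{ℤ_n}(d) = {x : gcd(x, n) = d}`
(with the convention `gcd(0, n) = n`). -/
noncomputable def icgAdj (n : ℕ) (D : Set ℕ) : Matrix (ZMod n) (ZMod n) ℂ :=
  cayAdj {x : ZMod n | Nat.gcd x.val n ∈ D}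

/-- Transition matrix `H(t) = exp(i t A)` of a graph with adjacency matrix `A`. -/
noncomputable def transitionM {V : Type*} [Fintype V] [DecidableEq V]
    (A : Matrix V V ℂ) (t : ℝ) : Matrix V V ℂ :=
  NormedSpace.exp ((Complex.I * (t : ℂ)) • A)

/-- `D ∈ 𝒟_n`: `D` is a set of positive divisors of `n` of the form
`D = D̃ ∪ D' ∪ 2D' ∪ 4D'` with `D̃ ⊆ {d ∣ n : n/d ≡ 0 (mod 8)}` and
`D' ⊆ {d ∣ n : n/d ≡ 4 (mod 8)}`, such that (the image of) `D` generates the group `ℤ_n`. -/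
def memScrD (n : ℕ) (D : Set ℕ) : Prop :=
  (∀ d ∈ D, 0 < d ∧ d ∣ n) ∧
  (∃ Dt D' : Set ℕ,
      Dt ⊆ {d : ℕ | d ∣ n ∧ n / d % 8 = 0} ∧
      D' ⊆ {d : ℕ | d ∣ n ∧ n / d % 8 = 4} ∧
      D = Dt ∪ D' ∪ (fun d => 2 * d) '' D' ∪ (fun d => 4 * d) '' D') ∧
  AddSubgroup.closure {x : ZMod n | ∃ d ∈ D, x = (d : ZMod n)} = ⊤

/-- Let `n` be a positive multiple of `4` and `D ∈ 𝒟_n`.  Then the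
transition matrix of `ICG_n(D)` at time `π/2` is the identity matrix; in particular
`ICG_n(D)` is connected and periodic at `π/2`. -/
theorem icg_scrD_periodic (n : ℕ) [NeZero n] (h4 : 4 ∣ n) (D : Set ℕ) (hD : memScrD n D) :
    transitionM (icgAdj n D) (Real.pi / 2) = 1 ∧
    (SimpleGraph.fromRel fun x y : ZMod n => Nat.gcd (x - y).val n ∈ D).Connected ∧
    (∃ γ : ℂ, ‖γ‖ = 1 ∧ transitionM (icgAdj n D) (Real.pi / 2) = γ • 1) := by
  obtain ⟨hpos, ⟨Dt, D', hDt, hD', hDeq⟩, hgen⟩ := hD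
  have hone : transitionM (icgAdj n D) (Real.pi / 2) = 1 := by
    have h := matrix_exp_one n
      ({x : ZMod n | Nat.gcd x.val n ∈ D}.indicator (fun _ => (1 : ℂ)))
      (fun k => lam_div n D hpos Dt D' hDt hD' hDeq k)
    exact h
  exact ⟨hone, icg_connected n D hpos hgen,
    ⟨1, by simp, by rw [hone, one_smul]⟩⟩
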